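/- Let σ be a ranking over a set S of κ items drawn from the PL model with parameter θ satisfying |θ_i| ≤ b for all i ∈ S. For any item i ∈ S and any 1 ≤ ℓ ≤ κ − 1, P_θ[σ^{−1}(i) = ℓ] ≤ (e^{6b}/κ) · (1 − ℓ/(κ + α))^{α − 1} ≤ e^{6b}/(κ − ℓ), where α = ⌊α̃⌋ and α̃ = min_{ℓ′∈[ℓ]} min_{Ω ⊆ S∖{i}, |Ω| = κ−ℓ′+1} e^{θ_i} / ((Σ_{j∈Ω} e^{θ_j})/|Ω|). -/

import Mathlib

open Real

noncomputable section

/- A ranking of a finite set `S`: a bijection from positions `Fin S.card`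
(position `0` is the highest rank) to the elements of `S`. -/
abbrev Ranking {ι : Type*} [DecidableEq ι] (S : Finset ι) := Fin S.card ≃ {x // x ∈ S}

/- The Plackett–Luce probability of observing the ranking `σ` of the set `S`,
under parameter `θ`. -/
noncomputable def PLProb {ι : Type*} [DecidableEq ι] (θ : ι → ℝ) (S : Finset ι)
    (σ : Ranking S) : ℝ :=
  ∏ a : Fin S.card,
    (Real.exp (θ (σ a).1) /
      ∑ a' ∈ Finset.univ.filter (fun a' => a ≤ a'), Real.exp (θ (σ a').1))

/- The (1-based) position at which item `i` is ranked by `σ`. -/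
def rankOf {ι : Type*} [DecidableEq ι] {S : Finset ι} (σ : Ranking S)
    (i : {x // x ∈ S}) : ℕ := (σ.symm i).val + 1

/- Probability of an event under the PL model for a single ranking of `S`. -/
open Classical in
noncomputable def PLprobEvent {ι : Type*} [DecidableEq ι] (θ : ι → ℝ) (S : Finset ι)
    (E : Ranking S → Prop) : ℝ :=
  ∑ σ : Ranking S, if E σ then PLProb θ S σ else 0

/- Probability of an event for `n` independent PL rankings of fixed offer sets. -/
open Classical in
noncomputable def jointProb {d n : ℕ} (θ : Fin d → ℝ) (S : Fin n → Finset (Fin d))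
    (E : (∀ j, Ranking (S j)) → Prop) : ℝ :=
  ∑ σ : (∀ j, Ranking (S j)), if E σ then ∏ j, PLProb θ (S j) (σ j) else 0

/- The parameter space `Ω_b`. -/
def OmegaB {d : ℕ} (b : ℝ) (θ : Fin d → ℝ) : Prop :=
  (∑ i, θ i) = 0 ∧ ∀ i, |θ i| ≤ b

/- Contribution to the rank-breaking log-likelihood from the separator at
(1-based) position `p` of the ranking `σ`. -/
open Classical in
noncomputable def rbTerm {d : ℕ} (θ : Fin d → ℝ) {S : Finset (Fin d)} (σ : Ranking S)
    (p : ℕ) : ℝ :=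
  ∑ i ∈ S.attach, ∑ i' ∈ S.attach,
    if rankOf σ i' = p ∧ p < rankOf σ i then
      θ i'.1 - Real.log (Real.exp (θ i.1) + Real.exp (θ i'.1))
    else 0

/- The rank-breaking log-likelihood. -/
noncomputable def LRB {d n : ℕ} (S : Fin n → Finset (Fin d)) (ℓ : Fin n → ℕ)
    (p : (j : Fin n) → Fin (ℓ j) → ℕ) (lam : (j : Fin n) → Fin (ℓ j) → ℝ)
    (σ : ∀ j, Ranking (S j)) (θ : Fin d → ℝ) : ℝ :=
  ∑ j, ∑ a, lam j a * rbTerm θ (σ j) (p j a)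

/- The rank-one matrix `(e_i - e_{i'}) (e_i - e_{i'})ᵀ`. -/
noncomputable def pairMatrix {d : ℕ} (i i' : Fin d) : Matrix (Fin d) (Fin d) ℝ :=
  Matrix.vecMulVec (Pi.single i 1 - Pi.single i' 1) (Pi.single i 1 - Pi.single i' 1)

/- Weighted comparison-graph Laplacian `Σ_j w_j Σ_{i<i' ∈ S_j} (e_i-e_{i'})(e_i-e_{i'})ᵀ`. -/
open Classical in
noncomputable def graphLaplacian {d n : ℕ} (S : Fin n → Finset (Fin d)) (w : Fin n → ℝ) :
    Matrix (Fin d) (Fin d) ℝ :=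
  ∑ j, w j • ∑ i ∈ S j, ∑ i' ∈ S j, if i < i' then pairMatrix i i' else 0

/- The eigenvalues of a Hermitian matrix, sorted in increasing order. -/
noncomputable def sortedEig {d : ℕ} {M : Matrix (Fin d) (Fin d) ℝ} (hM : M.IsHermitian) :
    Fin d → ℝ :=
  hM.eigenvalues ∘ Tuple.sort hM.eigenvalues

/- Euclidean norm of a vector in `ℝ^m`. -/
noncomputable def l2norm {m : ℕ} (v : Fin m → ℝ) : ℝ := Real.sqrt (∑ i, (v i) ^ 2)

end

namespace PLwork

variable {ι : Type*} [DecidableEq ι]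

noncomputable def auxP (n : ℕ) (g : Fin n → ℝ) : ℝ :=
  ∏ a : Fin n, (g a / ∑ a' ∈ Finset.univ.filter (fun a' => a ≤ a'), g a')

lemma auxP_congr {n n' : ℕ} (h : n = n') (g : Fin n' → ℝ) :
    auxP n' g = auxP n (fun a => g (finCongr h a)) := by
  subst h
  simp [finCongr]

lemma filter_succ_le {m : ℕ} (b : Fin m) (g : Fin (m+1) → ℝ) :
    ∑ a' ∈ Finset.univ.filter (fun a' => b.succ ≤ a'), g a'
      = ∑ b' ∈ Finset.univ.filter (fun b' => b ≤ b'), g b'.succ := by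
  rw [Finset.sum_filter, Finset.sum_filter, Fin.sum_univ_succ]
  have h0 : ¬ (b.succ ≤ (0 : Fin (m+1))) := by
    simp [Fin.le_def]
  simp [Fin.succ_le_succ_iff, h0]

lemma auxP_succ {m : ℕ} (g : Fin (m+1) → ℝ) :
    auxP (m+1) g = (g 0 / ∑ a, g a) * auxP m (g ∘ Fin.succ) := by
  rw [auxP, Fin.prod_univ_succ]
  congr 1
  · congr 1
    apply Finset.sum_congr _ (fun _ _ => rfl)
    ext a'; simp [Fin.zero_le]
  · rw [auxP]
    apply Finset.prod_congr rfl
    intro b _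
    simp only [Function.comp]
    rw [filter_succ_le]

lemma PLProb_eq_auxP (θ : ι → ℝ) (S : Finset ι) (σ : Ranking S) :
    PLProb θ S σ = auxP S.card (fun a => Real.exp (θ (σ a).1)) := rfl

/-- The equivalence `Option ↥(S.erase j) ≃ ↥S`. -/
def optErase (S : Finset ι) (j : ι) (hj : j ∈ S) : Option {x // x ∈ S.erase j} ≃ {x // x ∈ S} where
  toFun o := o.elim ⟨j, hj⟩ (fun x => ⟨x.1, Finset.mem_of_mem_erase x.2⟩)
  invFun x := if h : x.1 = j then none else some ⟨x.1, Finset.mem_erase.2 ⟨h, x.2⟩⟩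
  left_inv o := by
    cases o with
    | none => simp
    | some x =>
      have : x.1 ≠ j := (Finset.mem_erase.1 x.2).1
      simp [this]
  right_inv x := by
    by_cases h : x.1 = j
    · simp [h]; exact Subtype.ext h.symm
    · simp [h]

lemma card_erase_succ {S : Finset ι} {j : ι} (hj : j ∈ S) :
    (S.erase j).card + 1 = S.card := by
  rw [Finset.card_erase_of_mem hj]
  exact Nat.succ_pred_eq_of_pos (Finset.card_pos.2 ⟨j, hj⟩)

/-- Glue an item `j` on top of a ranking of `S.erase j` to get a ranking of `S`. -/
noncomputable def glue {S : Finset ι} {j : ι} (hj : j ∈ S) (τ : Ranking (S.erase j)) :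
    Ranking S :=
  (finCongr (card_erase_succ hj).symm).trans
    ((finSuccEquiv _).trans ((Equiv.optionCongr τ).trans (optErase S j hj)))

lemma glue_cast_zero {S : Finset ι} {j : ι} (hj : j ∈ S) (τ : Ranking (S.erase j)) :
    glue hj τ (finCongr (card_erase_succ hj) 0) = ⟨j, hj⟩ := by
  simp [glue, optErase]

lemma glue_cast_succ {S : Finset ι} {j : ι} (hj : j ∈ S) (τ : Ranking (S.erase j))
    (c : Fin (S.erase j).card) :
    glue hj τ (finCongr (card_erase_succ hj) c.succ)
      = ⟨(τ c).1, Finset.mem_of_mem_erase (τ c).2⟩ := by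
  simp [glue, optErase]

end PLwork
namespace PLwork

variable {ι : Type*} [DecidableEq ι]

lemma glue_apply_zero {S : Finset ι} {j : ι} (hj : j ∈ S) (τ : Ranking (S.erase j))
    (a : Fin S.card) (ha : (a : ℕ) = 0) : glue hj τ a = ⟨j, hj⟩ := by
  have : a = finCongr (card_erase_succ hj) 0 := by
    apply Fin.ext; simpa using ha
  rw [this, glue_cast_zero]

lemma glue_apply_succ {S : Finset ι} {j : ι} (hj : j ∈ S) (τ : Ranking (S.erase j))
    (c : Fin (S.erase j).card) (a : Fin S.card) (ha : (a : ℕ) = (c : ℕ) + 1) :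
    glue hj τ a = ⟨(τ c).1, Finset.mem_of_mem_erase (τ c).2⟩ := by
  have : a = finCongr (card_erase_succ hj) c.succ := by
    apply Fin.ext; simpa using ha
  rw [this, glue_cast_succ]

lemma sum_exp_ranking (θ : ι → ℝ) (S : Finset ι) (σ : Ranking S) :
    ∑ a : Fin S.card, Real.exp (θ (σ a).1) = ∑ k ∈ S, Real.exp (θ k) := by
  rw [Equiv.sum_comp σ (fun x => Real.exp (θ x.1))]
  rw [← Finset.sum_attach S (fun k => Real.exp (θ k))]
  rfl

lemma PLProb_glue (θ : ι → ℝ) {S : Finset ι} {j : ι} (hj : j ∈ S) (τ : Ranking (S.erase j)) :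
    PLProb θ S (glue hj τ)
      = (Real.exp (θ j) / ∑ k ∈ S, Real.exp (θ k)) * PLProb θ (S.erase j) τ := by
  rw [PLProb_eq_auxP, auxP_congr (card_erase_succ hj)
    (fun a => Real.exp (θ ((glue hj τ a) : ι)))]
  rw [auxP_succ]
  congr 1
  rw [glue_cast_zero]
  congr 1
  rw [Equiv.sum_comp (finCongr (card_erase_succ hj))
    (fun a => Real.exp (θ ((glue hj τ a) : ι)))]
  exact sum_exp_ranking θ S (glue hj τ)

lemma rankOf_glue_self {S : Finset ι} {j : ι} (hj : j ∈ S)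
    (τ : Ranking (S.erase j)) : rankOf (glue hj τ) ⟨j, hj⟩ = 1 := by
  have h : glue hj τ (finCongr (card_erase_succ hj) 0) = ⟨j, hj⟩ := glue_cast_zero hj τ
  have h2 : (glue hj τ).symm ⟨j, hj⟩ = finCongr (card_erase_succ hj) 0 := by
    rw [← h, Equiv.symm_apply_apply]
  rw [rankOf, h2]
  rfl

lemma rankOf_glue_ne {S : Finset ι} {j i : ι} (hj : j ∈ S) (hi : i ∈ S) (hij : i ≠ j)
    (τ : Ranking (S.erase j)) :
    rankOf (glue hj τ) ⟨i, hi⟩ = rankOf τ ⟨i, Finset.mem_erase.2 ⟨hij, hi⟩⟩ + 1 := by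
  set c := τ.symm ⟨i, Finset.mem_erase.2 ⟨hij, hi⟩⟩ with hc
  have h : glue hj τ (finCongr (card_erase_succ hj) c.succ) = ⟨i, hi⟩ := by
    rw [glue_cast_succ]
    simp [hc]
  have h2 : (glue hj τ).symm ⟨i, hi⟩ = finCongr (card_erase_succ hj) c.succ := by
    rw [← h, Equiv.symm_apply_apply]
  rw [rankOf, h2, rankOf]
  rfl

/-- Decomposition of a ranking into its top item and the rest. -/
noncomputable def glueEquiv (S : Finset ι) (hS : 0 < S.card) :
    (Σ j : {x // x ∈ S}, Ranking (S.erase j.1)) ≃ Ranking S := by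
  refine Equiv.ofBijective (fun p => glue p.1.2 p.2) ⟨?_, ?_⟩
  · rintro ⟨⟨j, hj⟩, τ⟩ ⟨⟨j', hj'⟩, τ'⟩ hg
    simp only at hg
    have e1 : glue hj τ (⟨0, hS⟩ : Fin S.card) = ⟨j, hj⟩ := glue_apply_zero hj τ _ rfl
    have e2 : glue hj' τ' (⟨0, hS⟩ : Fin S.card) = ⟨j', hj'⟩ := glue_apply_zero hj' τ' _ rfl
    have hjj : j = j' := by
      have h := congrArg (fun e : Ranking S => e (⟨0, hS⟩ : Fin S.card)) hg
      rw [e1, e2] at h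
      exact congrArg Subtype.val h
    subst hjj
    have hττ : τ = τ' := by
      apply Equiv.ext
      intro c
      have hcs : ((finCongr (card_erase_succ hj) c.succ : Fin S.card) : ℕ) = (c : ℕ) + 1 := rfl
      have f1 : glue hj τ (finCongr (card_erase_succ hj) c.succ)
          = ⟨(τ c).1, Finset.mem_of_mem_erase (τ c).2⟩ := glue_apply_succ hj τ c _ hcs
      have f2 : glue hj' τ' (finCongr (card_erase_succ hj) c.succ)
          = ⟨(τ' c).1, Finset.mem_of_mem_erase (τ' c).2⟩ := glue_apply_succ hj' τ' c _ hcs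
      have h := congrArg
        (fun e : Ranking S => e (finCongr (card_erase_succ hj) c.succ)) hg
      rw [f1, f2] at h
      exact Subtype.ext (by simpa using h)
    subst hττ
    rfl
  · intro σ
    set j : {x // x ∈ S} := σ ⟨0, hS⟩ with hjdef
    set m := (S.erase j.1).card with hm
    set e : Option (Fin m) ≃ Option {x // x ∈ S.erase j.1} :=
      ((finSuccEquiv m).symm.trans ((finCongr (card_erase_succ j.2)).trans σ)).trans
        (optErase S j.1 j.2).symm with he
    have hc0 : (finCongr (card_erase_succ j.2)) (0 : Fin (m+1)) = (⟨0, hS⟩ : Fin S.card) := rfl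
    have hnone : e none = none := by
      simp only [he, Equiv.trans_apply, finSuccEquiv_symm_none, hc0]
      rw [← hjdef]
      simp [optErase]
    set τ : Ranking (S.erase j.1) := Equiv.removeNone e with hτ
    refine ⟨⟨j, τ⟩, ?_⟩
    apply Equiv.ext
    intro a
    set b := finCongr (card_erase_succ j.2).symm a with hb
    have hval : (a : ℕ) = (b : ℕ) := rfl
    rcases Fin.eq_zero_or_eq_succ b with h0 | ⟨c, hcs⟩
    · have ha0 : (a : ℕ) = 0 := by rw [hval, h0]; rfl
      have ha : a = (⟨0, hS⟩ : Fin S.card) := Fin.ext ha0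
      simp only
      rw [glue_apply_zero j.2 τ a ha0, ha, ← hjdef]
    · have hac : (a : ℕ) = (c : ℕ) + 1 := by rw [hval, hcs]; rfl
      simp only
      rw [glue_apply_succ j.2 τ c a hac]
      have hsome : e (some c) ≠ none := by
        intro hcon
        have := e.injective (hcon.trans hnone.symm)
        simp at this
      obtain ⟨x, hx⟩ := Option.ne_none_iff_exists'.1 hsome
      have hrn : some (τ c) = e (some c) := Equiv.removeNone_some e ⟨x, hx⟩
      have hsc : (finSuccEquiv m).symm (some c) = c.succ := finSuccEquiv_symm_some c
      have hec : e (some c)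
          = (optErase S j.1 j.2).symm (σ (finCongr (card_erase_succ j.2) c.succ)) := by
        simp only [he, Equiv.trans_apply, hsc]
      rw [hec] at hrn
      have h3 := congrArg (optErase S j.1 j.2) hrn
      rw [Equiv.apply_symm_apply] at h3
      have hca : finCongr (card_erase_succ j.2) c.succ = a := by
        apply Fin.ext; simp [hac]
      rw [hca] at h3
      rw [← h3]
      rfl

lemma sum_rankings {M : Type*} [AddCommMonoid M] (S : Finset ι) (hS : 0 < S.card)
    (f : Ranking S → M) :
    ∑ σ : Ranking S, f σ
      = ∑ j ∈ S.attach, ∑ τ : Ranking (S.erase j.1), f (glue j.2 τ) := by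
  rw [← Equiv.sum_comp (glueEquiv S hS) f]
  rw [← Finset.univ_sigma_univ, Finset.sum_sigma]
  rw [Finset.univ_eq_attach]
  rfl

end PLwork
namespace PLwork

variable {ι : Type*} [DecidableEq ι]

/-- `if` with the classical instance, matching `PLprobEvent`. -/
noncomputable def cite (P : Prop) (x y : ℝ) : ℝ := @ite ℝ P (Classical.propDecidable P) x y

lemma cite_pos {P : Prop} (h : P) (x y : ℝ) : cite P x y = x := by
  rw [cite, if_pos h]

lemma cite_neg {P : Prop} (h : ¬ P) (x y : ℝ) : cite P x y = y := by
  rw [cite, if_neg h]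

lemma cite_nonneg {P : Prop} {x y : ℝ} (hx : 0 ≤ x) (hy : 0 ≤ y) : 0 ≤ cite P x y := by
  rw [cite]; split
  · exact hx
  · exact hy

lemma PLprobEvent_eq (θ : ι → ℝ) (S : Finset ι) (E : Ranking S → Prop) :
    PLprobEvent θ S E = ∑ σ : Ranking S, cite (E σ) (PLProb θ S σ) 0 := rfl

lemma exp_sum_pos (θ : ι → ℝ) {S : Finset ι} (hS : S.Nonempty) :
    0 < ∑ k ∈ S, Real.exp (θ k) :=
  Finset.sum_pos (fun k _ => Real.exp_pos _) hS

lemma PLProb_nonneg (θ : ι → ℝ) (S : Finset ι) (σ : Ranking S) : 0 ≤ PLProb θ S σ := by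
  apply Finset.prod_nonneg
  intro a _
  apply div_nonneg (Real.exp_pos _).le
  apply Finset.sum_nonneg
  intro a' _
  exact (Real.exp_pos _).le

lemma sum_PLProb (θ : ι → ℝ) : ∀ (n : ℕ) (S : Finset ι), S.card = n →
    ∑ σ : Ranking S, PLProb θ S σ = 1 := by
  intro n
  induction n with
  | zero =>
    intro S hS
    rw [Finset.card_eq_zero] at hS
    subst hS
    haveI : IsEmpty (Fin (∅ : Finset ι).card) := by
      rw [Finset.card_empty]; infer_instance
    haveI : IsEmpty {x // x ∈ (∅ : Finset ι)} := by
      constructor; rintro ⟨x, hx⟩; exact absurd hx (Finset.notMem_empty x)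
    haveI : Unique (Ranking (∅ : Finset ι)) :=
      ⟨⟨Equiv.equivOfIsEmpty _ _⟩, fun e => Equiv.ext (fun x => isEmptyElim x)⟩
    rw [Fintype.sum_unique]
    rw [PLProb]
    apply Finset.prod_of_isEmpty
  | succ n ih =>
    intro S hS
    have hpos : 0 < S.card := by omega
    rw [sum_rankings S hpos]
    have : ∀ j ∈ S.attach,
        ∑ τ : Ranking (S.erase j.1), PLProb θ S (glue j.2 τ)
          = Real.exp (θ j.1) / ∑ k ∈ S, Real.exp (θ k) := by
      intro j _
      have hcard : (S.erase j.1).card = n := by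
        have := card_erase_succ j.2
        omega
      calc ∑ τ : Ranking (S.erase j.1), PLProb θ S (glue j.2 τ)
          = ∑ τ : Ranking (S.erase j.1),
              (Real.exp (θ j.1) / ∑ k ∈ S, Real.exp (θ k)) * PLProb θ (S.erase j.1) τ := by
            exact Finset.sum_congr rfl (fun τ _ => PLProb_glue θ j.2 τ)
        _ = (Real.exp (θ j.1) / ∑ k ∈ S, Real.exp (θ k))
              * ∑ τ : Ranking (S.erase j.1), PLProb θ (S.erase j.1) τ := by
            rw [Finset.mul_sum]
        _ = Real.exp (θ j.1) / ∑ k ∈ S, Real.exp (θ k) := by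
            rw [ih (S.erase j.1) hcard, mul_one]
    rw [Finset.sum_congr rfl this]
    rw [Finset.sum_attach S (fun k => Real.exp (θ k) / ∑ k ∈ S, Real.exp (θ k))]
    rw [← Finset.sum_div]
    apply div_self
    exact (exp_sum_pos θ (Finset.card_pos.1 hpos)).ne'

/-- rank-`r` probability, with the membership proof internalized. -/
noncomputable def PE (θ : ι → ℝ) (A : Finset ι) (i : ι) (r : ℕ) : ℝ :=
  PLprobEvent θ A (fun σ => ∃ h : i ∈ A, rankOf σ ⟨i, h⟩ = r)

lemma PE_eq (θ : ι → ℝ) {A : Finset ι} {i : ι} (hi : i ∈ A) (r : ℕ) :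
    PE θ A i r = PLprobEvent θ A (fun σ => rankOf σ ⟨i, hi⟩ = r) := by
  rw [PE, PLprobEvent_eq, PLprobEvent_eq]
  apply Finset.sum_congr rfl
  intro σ _
  congr 1
  simp only [eq_iff_iff]
  constructor
  · rintro ⟨h, hr⟩; exact hr
  · intro hr; exact ⟨hi, hr⟩

lemma PE_nonneg (θ : ι → ℝ) (A : Finset ι) (i : ι) (r : ℕ) : 0 ≤ PE θ A i r := by
  rw [PE, PLprobEvent_eq]
  apply Finset.sum_nonneg
  intro σ _
  exact cite_nonneg (PLProb_nonneg θ A σ) le_rfl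

lemma PE_not_mem (θ : ι → ℝ) {A : Finset ι} {i : ι} (hi : i ∉ A) (r : ℕ) :
    PE θ A i r = 0 := by
  rw [PE, PLprobEvent_eq]
  apply Finset.sum_eq_zero
  intro σ _
  apply cite_neg
  rintro ⟨h, _⟩
  exact hi h

lemma PE_one (θ : ι → ℝ) {A : Finset ι} {i : ι} (hi : i ∈ A) :
    PE θ A i 1 = Real.exp (θ i) / ∑ k ∈ A, Real.exp (θ k) := by
  have hpos : 0 < A.card := Finset.card_pos.2 ⟨i, hi⟩
  rw [PE, PLprobEvent_eq, sum_rankings A hpos]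
  rw [Finset.sum_eq_single_of_mem (⟨i, hi⟩ : {x // x ∈ A}) (Finset.mem_attach _ _)]
  · show (∑ τ : Ranking (A.erase i),
        cite (∃ h : i ∈ A, rankOf (glue hi τ) ⟨i, h⟩ = 1) (PLProb θ A (glue hi τ)) 0)
      = Real.exp (θ i) / ∑ k ∈ A, Real.exp (θ k)
    have key : ∀ τ : Ranking (A.erase i),
        cite (∃ h : i ∈ A, rankOf (glue hi τ) ⟨i, h⟩ = 1) (PLProb θ A (glue hi τ)) 0
          = (Real.exp (θ i) / ∑ k ∈ A, Real.exp (θ k)) * PLProb θ (A.erase i) τ := by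
      intro τ
      rw [cite_pos ⟨hi, rankOf_glue_self hi τ⟩, PLProb_glue]
    rw [Finset.sum_congr rfl (fun τ _ => key τ), ← Finset.mul_sum]
    rw [sum_PLProb θ (A.erase i).card (A.erase i) rfl, mul_one]
  · intro j _ hj
    apply Finset.sum_eq_zero
    intro τ _
    apply cite_neg
    rintro ⟨h, hr⟩
    have hij : i ≠ j.1 := fun hcon => hj (Subtype.ext hcon.symm)
    rw [rankOf_glue_ne j.2 h hij τ] at hr
    rw [rankOf] at hr
    omega

lemma PE_succ (θ : ι → ℝ) {A : Finset ι} {i : ι} (hi : i ∈ A) (r : ℕ) :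
    PE θ A i (r + 2)
      = ∑ j ∈ A.attach,
          (Real.exp (θ j.1) / ∑ k ∈ A, Real.exp (θ k)) * PE θ (A.erase j.1) i (r + 1) := by
  have hpos : 0 < A.card := Finset.card_pos.2 ⟨i, hi⟩
  rw [PE, PLprobEvent_eq, sum_rankings A hpos]
  apply Finset.sum_congr rfl
  intro j _
  by_cases hij : i = j.1
  · rw [PE_not_mem θ (show i ∉ A.erase j.1 by rw [hij]; exact Finset.notMem_erase _ _) (r+1),
      mul_zero]
    apply Finset.sum_eq_zero
    intro τ _
    apply cite_neg
    rintro ⟨h, hr⟩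
    have h2 : rankOf (glue j.2 τ) ⟨i, h⟩ = 1 := by
      have h3 := rankOf_glue_self j.2 τ
      subst hij
      exact h3
    omega
  · have key : ∀ τ : Ranking (A.erase j.1),
        cite (∃ h : i ∈ A, rankOf (glue j.2 τ) ⟨i, h⟩ = r + 2) (PLProb θ A (glue j.2 τ)) 0
          = (Real.exp (θ j.1) / ∑ k ∈ A, Real.exp (θ k))
              * cite (∃ h : i ∈ A.erase j.1, rankOf τ ⟨i, h⟩ = r + 1)
                  (PLProb θ (A.erase j.1) τ) 0 := by
      intro τ
      have hie : i ∈ A.erase j.1 := Finset.mem_erase.2 ⟨hij, hi⟩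
      have hrank : rankOf (glue j.2 τ) ⟨i, hi⟩ = rankOf τ ⟨i, hie⟩ + 1 :=
        rankOf_glue_ne j.2 hi hij τ
      by_cases hE : rankOf τ ⟨i, hie⟩ = r + 1
      · rw [cite_pos ⟨hi, by rw [hrank, hE]⟩, cite_pos ⟨hie, hE⟩, PLProb_glue]
      · rw [cite_neg, cite_neg, mul_zero]
        · rintro ⟨h, hr⟩; exact hE hr
        · rintro ⟨h, hr⟩
          have hr' : rankOf (glue j.2 τ) ⟨i, hi⟩ = r + 2 := hr
          rw [hrank] at hr'
          exact hE (by omega)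
    rw [Finset.sum_congr rfl (fun τ _ => key τ), ← Finset.mul_sum]
    rfl

end PLwork
namespace PLwork

variable {ι : Type*} [DecidableEq ι]

lemma exp_le_of_mem {θ : ι → ℝ} {b : ℝ} {S : Finset ι} (hθb : ∀ k ∈ S, |θ k| ≤ b)
    {k : ι} (hk : k ∈ S) : Real.exp (θ k) ≤ Real.exp b :=
  Real.exp_le_exp.2 ((abs_le.1 (hθb k hk)).2)

lemma le_exp_of_mem {θ : ι → ℝ} {b : ℝ} {S : Finset ι} (hθb : ∀ k ∈ S, |θ k| ≤ b)
    {k : ι} (hk : k ∈ S) : Real.exp (-b) ≤ Real.exp (θ k) :=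
  Real.exp_le_exp.2 ((abs_le.1 (hθb k hk)).1)

lemma sum_exp_lower {θ : ι → ℝ} {b : ℝ} {S : Finset ι} (hθb : ∀ k ∈ S, |θ k| ≤ b)
    {Ω : Finset ι} (hΩ : Ω ⊆ S) :
    (Ω.card : ℝ) * Real.exp (-b) ≤ ∑ k ∈ Ω, Real.exp (θ k) := by
  calc (Ω.card : ℝ) * Real.exp (-b) = ∑ _k ∈ Ω, Real.exp (-b) := by
        rw [Finset.sum_const, nsmul_eq_mul]
    _ ≤ ∑ k ∈ Ω, Real.exp (θ k) :=
        Finset.sum_le_sum (fun k hk => le_exp_of_mem hθb (hΩ hk))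

lemma sum_exp_upper {θ : ι → ℝ} {b : ℝ} {S : Finset ι} (hθb : ∀ k ∈ S, |θ k| ≤ b)
    {Ω : Finset ι} (hΩ : Ω ⊆ S) :
    ∑ k ∈ Ω, Real.exp (θ k) ≤ (Ω.card : ℝ) * Real.exp b := by
  calc ∑ k ∈ Ω, Real.exp (θ k) ≤ ∑ _k ∈ Ω, Real.exp b :=
        Finset.sum_le_sum (fun k hk => exp_le_of_mem hθb (hΩ hk))
    _ = (Ω.card : ℝ) * Real.exp b := by rw [Finset.sum_const, nsmul_eq_mul]

/-- The main inductive bound on the probability that `i` is ranked at position `m`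
among a remaining set `A`. -/
lemma PE_bound (θ : ι → ℝ) (S : Finset ι) (b : ℝ) (i : ι) (ℓ : ℕ) (a : ℕ)
    (hθb : ∀ k ∈ S, |θ k| ≤ b) (hb : 0 ≤ b)
    (hℓ1 : 1 ≤ ℓ) (hℓκ : ℓ + 1 ≤ S.card)
    (hα : ∀ (ℓ' : ℕ) (Ω : Finset ι), 1 ≤ ℓ' → ℓ' ≤ ℓ → Ω ⊆ S.erase i →
      Ω.card = S.card - ℓ' + 1 →
      (a : ℝ) * (∑ k ∈ Ω, Real.exp (θ k)) ≤ Real.exp (θ i) * (Ω.card : ℝ)) :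
    ∀ m : ℕ, 1 ≤ m → ∀ A : Finset ι, A ⊆ S → i ∈ A → A.card = S.card - ℓ + m →
      PE θ A i m ≤ (Real.exp (2*b) / ((S.card - ℓ : ℕ) + 1 : ℝ))
        * ∏ t ∈ Finset.Ico (ℓ - m + 1) ℓ,
            (((S.card - t : ℕ) : ℝ) / (((S.card - t : ℕ) : ℝ) + (a : ℝ))) := by
  intro m hm
  induction m, hm using Nat.le_induction with
  | base =>
    intro A hAS hiA hcard
    have h1 : ℓ - 1 + 1 = ℓ := by omega
    rw [h1, Finset.Ico_self, Finset.prod_empty, mul_one]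
    rw [PE_one θ hiA]
    have hAne : A.Nonempty := ⟨i, hiA⟩
    have hWpos : 0 < ∑ k ∈ A, Real.exp (θ k) := exp_sum_pos θ hAne
    have hcpos : (0:ℝ) < ((S.card - ℓ : ℕ) : ℝ) + 1 := by positivity
    rw [div_le_div_iff₀ hWpos hcpos]
    have hsplit : ∑ k ∈ A, Real.exp (θ k)
        = Real.exp (θ i) + ∑ k ∈ A.erase i, Real.exp (θ k) := by
      rw [← Finset.add_sum_erase A _ hiA]
    have hcard' : (A.erase i).card = S.card - ℓ := by
      rw [Finset.card_erase_of_mem hiA]; omega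
    have hR : ((S.card - ℓ : ℕ) : ℝ) * Real.exp (-b) ≤ ∑ k ∈ A.erase i, Real.exp (θ k) := by
      have := sum_exp_lower hθb (Finset.Subset.trans (Finset.erase_subset i A) hAS)
      rwa [hcard'] at this
    have hwi : Real.exp (θ i) ≤ Real.exp b := exp_le_of_mem hθb (hAS hiA)
    have hexp1 : (1:ℝ) ≤ Real.exp (2*b) := by
      rw [← Real.exp_zero]; exact Real.exp_le_exp.2 (by linarith)
    have hebb : Real.exp b * Real.exp (-b) = 1 := by
      rw [← Real.exp_add]; simp
    have key : Real.exp (θ i) * (((S.card - ℓ : ℕ) : ℝ))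
        ≤ Real.exp (2*b) * ∑ k ∈ A.erase i, Real.exp (θ k) := by
      have h2 : Real.exp (2*b) = Real.exp b * Real.exp b := by
        rw [← Real.exp_add]; ring_nf
      calc Real.exp (θ i) * ((S.card - ℓ : ℕ) : ℝ)
          ≤ Real.exp b * ((S.card - ℓ : ℕ) : ℝ) := by
            apply mul_le_mul_of_nonneg_right hwi (by positivity)
        _ = Real.exp b * Real.exp b * (((S.card - ℓ : ℕ) : ℝ) * Real.exp (-b)) := by
            rw [mul_assoc, ← mul_assoc (Real.exp b)]
            rw [mul_comm ((((S.card - ℓ : ℕ) : ℝ))) (Real.exp (-b))]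
            rw [← mul_assoc, mul_assoc _ (Real.exp b) (Real.exp (-b)), hebb, mul_one]
        _ ≤ Real.exp (2*b) * ∑ k ∈ A.erase i, Real.exp (θ k) := by
            rw [h2]
            apply mul_le_mul_of_nonneg_left hR (by positivity)
    calc Real.exp (θ i) * (((S.card - ℓ : ℕ) : ℝ) + 1)
        = Real.exp (θ i) * ((S.card - ℓ : ℕ) : ℝ) + Real.exp (θ i) := by ring
      _ ≤ Real.exp (2*b) * ∑ k ∈ A.erase i, Real.exp (θ k)
            + Real.exp (2*b) * Real.exp (θ i) := by
          apply add_le_add key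
          nlinarith [Real.exp_pos (θ i)]
      _ = Real.exp (2*b) * ∑ k ∈ A, Real.exp (θ k) := by
          rw [hsplit]; ring
  | succ m hm ih =>
    intro A hAS hiA hcard
    have hmℓ : m + 1 ≤ ℓ := by
      have := Finset.card_le_card hAS
      omega
    obtain ⟨k, rfl⟩ : ∃ k, m = k + 1 := ⟨m - 1, by omega⟩
    rw [PE_succ θ hiA k]
    set W := ∑ k ∈ A, Real.exp (θ k) with hW
    have hWpos : 0 < W := exp_sum_pos θ ⟨i, hiA⟩
    set Bm := (Real.exp (2*b) / ((S.card - ℓ : ℕ) + 1 : ℝ))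
        * ∏ t ∈ Finset.Ico (ℓ - (k+1) + 1) ℓ,
            (((S.card - t : ℕ) : ℝ) / (((S.card - t : ℕ) : ℝ) + (a : ℝ))) with hBm
    have hBm_nonneg : 0 ≤ Bm := by
      rw [hBm]
      apply mul_nonneg (by positivity)
      apply Finset.prod_nonneg
      intro t _
      positivity
    have step1 : ∀ j ∈ A.attach,
        (Real.exp (θ j.1) / W) * PE θ (A.erase j.1) i (k + 1)
          ≤ (Real.exp (θ j.1) / W) * (if j.1 = i then 0 else Bm) := by
      intro j _
      apply mul_le_mul_of_nonneg_left _ (by positivity)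
      by_cases hji : j.1 = i
      · rw [if_pos hji, hji]
        rw [PE_not_mem θ (Finset.notMem_erase i A)]
      · rw [if_neg hji]
        apply ih (A.erase j.1)
        · exact Finset.Subset.trans (Finset.erase_subset _ _) hAS
        · exact Finset.mem_erase.2 ⟨fun h => hji h.symm, hiA⟩
        · rw [Finset.card_erase_of_mem j.2]; omega
    have step2 : ∑ j ∈ A.attach, (Real.exp (θ j.1) / W) * (if j.1 = i then 0 else Bm)
        = ((∑ k ∈ A.erase i, Real.exp (θ k)) / W) * Bm := by
      rw [Finset.sum_attach A (fun x => (Real.exp (θ x) / W) * (if x = i then 0 else Bm))]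
      rw [← Finset.add_sum_erase A _ hiA, if_pos rfl, mul_zero, zero_add]
      rw [Finset.sum_congr rfl (fun x hx => by
        rw [if_neg (Finset.mem_erase.1 hx).1])]
      rw [← Finset.sum_mul, ← Finset.sum_div]
    have hR : (a : ℝ) * (∑ k ∈ A.erase i, Real.exp (θ k))
        ≤ Real.exp (θ i) * ((S.card - (ℓ - (k+1)) : ℕ) : ℝ) := by
      have hΩsub : A.erase i ⊆ S.erase i := fun x hx => by
        rcases Finset.mem_erase.1 hx with ⟨hx1, hx2⟩
        exact Finset.mem_erase.2 ⟨hx1, hAS hx2⟩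
      have hΩcard : (A.erase i).card = S.card - (ℓ - (k+1) + 1) + 1 := by
        rw [Finset.card_erase_of_mem hiA]; omega
      have := hα (ℓ - (k+1) + 1) (A.erase i) (by omega) (by omega) hΩsub hΩcard
      rw [hΩcard] at this
      convert this using 3
      omega
    have step3 : ((∑ k ∈ A.erase i, Real.exp (θ k)) / W)
        ≤ (((S.card - (ℓ - (k+1)) : ℕ) : ℝ)
            / (((S.card - (ℓ - (k+1)) : ℕ) : ℝ) + (a : ℝ))) := by
      set R := ∑ k ∈ A.erase i, Real.exp (θ k) with hRdef
      set ct := ((S.card - (ℓ - (k+1)) : ℕ) : ℝ) with hct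
      have hctpos : 0 < ct := by
        rw [hct]
        have : 0 < S.card - (ℓ - (k+1)) := by omega
        exact_mod_cast this
      have hdenpos : 0 < ct + (a:ℝ) := by positivity
      have hRnonneg : 0 ≤ R := Finset.sum_nonneg (fun x _ => (Real.exp_pos _).le)
      have hsplit : W = Real.exp (θ i) + R := by
        rw [hW, hRdef, ← Finset.add_sum_erase A _ hiA]
      rw [div_le_div_iff₀ hWpos hdenpos, hsplit]
      nlinarith [Real.exp_pos (θ i), hR]
    have hprodsplit : (Real.exp (2*b) / ((S.card - ℓ : ℕ) + 1 : ℝ))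
        * ∏ t ∈ Finset.Ico (ℓ - (k+1+1) + 1) ℓ,
            (((S.card - t : ℕ) : ℝ) / (((S.card - t : ℕ) : ℝ) + (a : ℝ)))
        = (((S.card - (ℓ - (k+1)) : ℕ) : ℝ)
            / (((S.card - (ℓ - (k+1)) : ℕ) : ℝ) + (a : ℝ))) * Bm := by
      have h1 : ℓ - (k+1+1) + 1 = ℓ - (k+1) := by omega
      have h2 : ℓ - (k+1) < ℓ := by omega
      rw [h1, Finset.prod_eq_prod_Ico_succ_bot h2, hBm]
      ring
    calc ∑ j ∈ A.attach, (Real.exp (θ j.1) / W) * PE θ (A.erase j.1) i (k + 1)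
        ≤ ∑ j ∈ A.attach, (Real.exp (θ j.1) / W) * (if j.1 = i then 0 else Bm) :=
          Finset.sum_le_sum step1
      _ = ((∑ k ∈ A.erase i, Real.exp (θ k)) / W) * Bm := step2
      _ ≤ (((S.card - (ℓ - (k+1)) : ℕ) : ℝ)
            / (((S.card - (ℓ - (k+1)) : ℕ) : ℝ) + (a : ℝ))) * Bm :=
          mul_le_mul_of_nonneg_right step3 hBm_nonneg
      _ = _ := by rw [hprodsplit]

end PLwork
namespace PLwork

lemma telescope (a u : ℕ) (hu : 1 ≤ u) :
    ∀ v, u ≤ v → ∏ s ∈ Finset.Ico u v, (((s:ℝ) + a) / ((s:ℝ) + a + 1))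
      = ((u:ℝ) + a) / ((v:ℝ) + a) := by
  intro v hv
  induction v, hv using Nat.le_induction with
  | base =>
    rw [Finset.Ico_self, Finset.prod_empty, div_self]
    positivity
  | succ v hv ih =>
    rw [Finset.prod_Ico_succ_top hv, ih]
    have h1 : (0:ℝ) < (v:ℝ) + a := by
      have : (1:ℝ) ≤ (v:ℝ) := by exact_mod_cast hu.trans hv
      linarith
    push_cast
    rw [div_mul_div_comm, mul_comm ((u:ℝ)+(a:ℝ)) ((v:ℝ)+(a:ℝ)),
      mul_div_mul_left _ _ (ne_of_gt h1)]
    ring_nf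

lemma prod_ratio (u v : ℕ) (hu : 1 ≤ u) (huv : u ≤ v) (a : ℕ) :
    ∏ s ∈ Finset.Ico u v, ((s:ℝ) / ((s:ℝ) + a))
      = ∏ j ∈ Finset.range a, (((u:ℝ) + j) / ((v:ℝ) + j)) := by
  induction a with
  | zero =>
    rw [Finset.range_zero, Finset.prod_empty]
    apply Finset.prod_eq_one
    intro s hs
    have h1 : (1:ℝ) ≤ (s:ℝ) := by exact_mod_cast hu.trans (Finset.mem_Ico.1 hs).1
    push_cast
    rw [add_zero, div_self (by linarith)]
  | succ a ih =>
    have key : ∀ s ∈ Finset.Ico u v, ((s:ℝ) / ((s:ℝ) + (a+1:ℕ)))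
        = ((s:ℝ) / ((s:ℝ) + a)) * (((s:ℝ) + a) / ((s:ℝ) + a + 1)) := by
      intro s hs
      have h1 : (1:ℝ) ≤ (s:ℝ) := by exact_mod_cast hu.trans (Finset.mem_Ico.1 hs).1
      have h2 : (0:ℝ) < (s:ℝ) + a := by positivity
      push_cast
      rw [div_mul_div_comm, mul_comm ((s:ℝ)) ((s:ℝ)+a), mul_div_mul_left _ _ (by linarith)]
      ring_nf
    rw [Finset.prod_congr rfl key, Finset.prod_mul_distrib, ih,
      telescope a u hu v huv, Finset.prod_range_succ]

lemma reindex_prod (κ ℓ : ℕ) (a : ℕ) (hℓκ : ℓ ≤ κ) :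
    ∏ t ∈ Finset.Ico 1 ℓ, (((κ - t : ℕ):ℝ) / (((κ - t : ℕ):ℝ) + a))
      = ∏ s ∈ Finset.Ico (κ - ℓ + 1) κ, ((s:ℝ) / ((s:ℝ) + a)) := by
  apply Finset.prod_nbij' (fun t => κ - t) (fun s => κ - s)
  · intro t ht
    rw [Finset.mem_Ico] at *
    omega
  · intro s hs
    rw [Finset.mem_Ico] at *
    omega
  · intro t ht
    rw [Finset.mem_Ico] at ht
    omega
  · intro s hs
    rw [Finset.mem_Ico] at hs
    omega
  · intro t _
    rfl

lemma one_lt_four_mul_b {b : ℝ} (h2 : (2:ℝ) ≤ Real.exp (2*b)) : 1 < 4 * b := by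
  have hlog : Real.log 2 ≤ 2 * b := by
    have := Real.log_le_log (by norm_num) h2
    rwa [Real.log_exp] at this
  have hl2 : (0.6931471803 : ℝ) < Real.log 2 := Real.log_two_gt_d9
  linarith

lemma arith1 (κ ℓ a : ℕ) (b : ℝ) (hb : 0 ≤ b) (hℓ : 2 ≤ ℓ) (hκ : ℓ + 1 ≤ κ)
    (ha : (a:ℝ) ≤ Real.exp (2*b)) :
    (Real.exp (2*b) / (((κ - ℓ : ℕ):ℝ) + 1))
        * ∏ t ∈ Finset.Ico 1 ℓ, (((κ - t : ℕ):ℝ) / (((κ - t : ℕ):ℝ) + (a:ℝ)))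
      ≤ (Real.exp (6*b) / (κ:ℝ)) * ((1 - (ℓ:ℝ) / ((κ:ℝ) + (a:ℝ))) ^ ((a:ℤ) - 1)) := by
  set c : ℕ := κ - ℓ with hc
  have hc1 : 1 ≤ c := by omega
  have hcast : (c:ℝ) = (κ:ℝ) - (ℓ:ℝ) := by
    rw [hc, Nat.cast_sub (by omega)]
  have hκpos : (0:ℝ) < (κ:ℝ) := by
    have : 0 < κ := by omega
    exact_mod_cast this
  have hcpos : (0:ℝ) < (c:ℝ) := by
    exact_mod_cast hc1
  have hprod : ∏ t ∈ Finset.Ico 1 ℓ, (((κ - t : ℕ):ℝ) / (((κ - t : ℕ):ℝ) + (a:ℝ)))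
      = ∏ j ∈ Finset.range a, (((c:ℝ) + 1 + (j:ℝ)) / ((κ:ℝ) + (j:ℝ))) := by
    rw [reindex_prod κ ℓ a (by omega), prod_ratio (c+1) κ (by omega) (by omega) a]
    apply Finset.prod_congr rfl
    intro j _
    push_cast
    ring_nf
  rw [hprod]
  have hXeq : (1 - (ℓ:ℝ) / ((κ:ℝ) + (a:ℝ))) = ((c:ℝ) + (a:ℝ)) / ((κ:ℝ) + (a:ℝ)) := by
    rw [hcast]
    have hne : (κ:ℝ) + (a:ℝ) ≠ 0 := by positivity
    field_simp
    ring
  set X : ℝ := ((c:ℝ) + (a:ℝ)) / ((κ:ℝ) + (a:ℝ)) with hXdef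
  have hXnonneg : 0 ≤ X := by positivity
  rw [hXeq]
  cases a with
  | zero =>
    rw [Finset.range_zero, Finset.prod_empty, mul_one]
    have hz : ((0:ℕ):ℤ) - 1 = -1 := by norm_num
    rw [hz, zpow_neg_one]
    have hX0 : X = (c:ℝ) / (κ:ℝ) := by rw [hXdef]; push_cast; ring_nf
    rw [hX0, inv_div]
    have heq : Real.exp (6*b) / (κ:ℝ) * ((κ:ℝ) / (c:ℝ)) = Real.exp (6*b) / (c:ℝ) := by
      field_simp
    rw [heq]
    apply div_le_div₀ (by positivity)
    · exact Real.exp_le_exp.2 (by linarith)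
    · exact hcpos
    · linarith
  | succ d =>
    have hz : (((d+1:ℕ)):ℤ) - 1 = (d:ℤ) := by push_cast; ring
    rw [hz, zpow_natCast]
    have hκd : (0:ℝ) < (κ:ℝ) + (d:ℝ) := by positivity
    set E : ℝ := Real.exp (1 / ((κ:ℝ) + (d:ℝ))) with hEdef
    have hfac : ∀ j ∈ Finset.range d,
        ((c:ℝ) + 1 + ((j+1:ℕ):ℝ)) / ((κ:ℝ) + ((j+1:ℕ):ℝ)) ≤ X * E := by
      intro j hj
      have hjd : (j:ℝ) + 1 ≤ (d:ℝ) := by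
        have := Finset.mem_range.1 hj
        exact_mod_cast this
      have hcκ : (c:ℝ) + 1 ≤ (κ:ℝ) := by
        rw [hcast]
        have : (1:ℝ) ≤ (ℓ:ℝ) := by exact_mod_cast (by omega : 1 ≤ ℓ)
        linarith
      have hstepA : ((c:ℝ) + 1 + ((j+1:ℕ):ℝ)) / ((κ:ℝ) + ((j+1:ℕ):ℝ))
          ≤ ((c:ℝ) + ((d+1:ℕ):ℝ)) / ((κ:ℝ) + (d:ℝ)) := by
        rw [div_le_div_iff₀ (by positivity) hκd]
        push_cast
        nlinarith
      have hstepB : ((c:ℝ) + ((d+1:ℕ):ℝ)) / ((κ:ℝ) + (d:ℝ)) = X * (((κ:ℝ) + ((d+1:ℕ):ℝ)) / ((κ:ℝ) + (d:ℝ))) := by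
        rw [hXdef]
        push_cast
        field_simp
      have hstepC : ((κ:ℝ) + ((d+1:ℕ):ℝ)) / ((κ:ℝ) + (d:ℝ)) ≤ E := by
        rw [hEdef]
        have h1 : ((κ:ℝ) + ((d+1:ℕ):ℝ)) / ((κ:ℝ) + (d:ℝ)) = 1 / ((κ:ℝ) + (d:ℝ)) + 1 := by
          push_cast
          field_simp
          ring
        rw [h1]
        have := Real.add_one_le_exp (1 / ((κ:ℝ) + (d:ℝ)))
        linarith
      calc ((c:ℝ) + 1 + ((j+1:ℕ):ℝ)) / ((κ:ℝ) + ((j+1:ℕ):ℝ))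
          ≤ ((c:ℝ) + ((d+1:ℕ):ℝ)) / ((κ:ℝ) + (d:ℝ)) := hstepA
        _ = X * (((κ:ℝ) + ((d+1:ℕ):ℝ)) / ((κ:ℝ) + (d:ℝ))) := hstepB
        _ ≤ X * E := mul_le_mul_of_nonneg_left hstepC hXnonneg
    have hEpos : 0 < E := Real.exp_pos _
    have hprod2 : ∏ j ∈ Finset.range (d+1), (((c:ℝ) + 1 + (j:ℝ)) / ((κ:ℝ) + (j:ℝ)))
        = (∏ j ∈ Finset.range d, (((c:ℝ) + 1 + ((j+1:ℕ):ℝ)) / ((κ:ℝ) + ((j+1:ℕ):ℝ))))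
            * (((c:ℝ) + 1) / (κ:ℝ)) := by
      rw [Finset.prod_range_succ' (fun j => (((c:ℝ) + 1 + (j:ℝ)) / ((κ:ℝ) + (j:ℝ)))) d]
      push_cast
      norm_num
    have hprod3 : ∏ j ∈ Finset.range d, (((c:ℝ) + 1 + ((j+1:ℕ):ℝ)) / ((κ:ℝ) + ((j+1:ℕ):ℝ)))
        ≤ (X * E) ^ d := by
      calc ∏ j ∈ Finset.range d, (((c:ℝ) + 1 + ((j+1:ℕ):ℝ)) / ((κ:ℝ) + ((j+1:ℕ):ℝ)))
          ≤ ∏ _j ∈ Finset.range d, (X * E) := by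
            apply Finset.prod_le_prod
            · intro j _
              positivity
            · exact hfac
        _ = (X * E) ^ d := by rw [Finset.prod_const, Finset.card_range]
    have hexpd : E ^ d ≤ Real.exp (4*b) := by
      rw [hEdef, ← Real.exp_nat_mul]
      apply Real.exp_le_exp.2
      rcases Nat.eq_zero_or_pos d with hd0 | hdpos
      · subst hd0
        simp
        positivity
      · have h2a : (2:ℝ) ≤ ((d+1:ℕ):ℝ) := by
          have : 2 ≤ d + 1 := by omega
          exact_mod_cast this
      
        have h4b : 1 < 4 * b := one_lt_four_mul_b (le_trans h2a ha)
        have hlt : (d:ℝ) * (1 / ((κ:ℝ) + (d:ℝ))) ≤ 1 := by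
          rw [mul_one_div]
          rw [div_le_one hκd]
          linarith
        linarith
    calc Real.exp (2*b) / ((c:ℝ) + 1)
            * ∏ j ∈ Finset.range (d+1), (((c:ℝ) + 1 + (j:ℝ)) / ((κ:ℝ) + (j:ℝ)))
        = Real.exp (2*b) / ((c:ℝ) + 1)
            * ((∏ j ∈ Finset.range d, (((c:ℝ) + 1 + ((j+1:ℕ):ℝ)) / ((κ:ℝ) + ((j+1:ℕ):ℝ))))
              * (((c:ℝ) + 1) / (κ:ℝ))) := by rw [hprod2]
      _ ≤ Real.exp (2*b) / ((c:ℝ) + 1) * (((X * E) ^ d) * (((c:ℝ) + 1) / (κ:ℝ))) := by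
          apply mul_le_mul_of_nonneg_left _ (by positivity)
          apply mul_le_mul_of_nonneg_right hprod3 (by positivity)
      _ = (Real.exp (2*b) / (κ:ℝ)) * (X ^ d * E ^ d) := by
          rw [mul_pow]
          field_simp
      _ ≤ (Real.exp (2*b) / (κ:ℝ)) * (X ^ d * Real.exp (4*b)) := by
          apply mul_le_mul_of_nonneg_left _ (by positivity)
          apply mul_le_mul_of_nonneg_left hexpd (by positivity)
      _ = Real.exp (6*b) / (κ:ℝ) * X ^ d := by
          rw [div_mul_eq_mul_div, div_mul_eq_mul_div]
          congr 1
          rw [← mul_assoc, mul_comm (Real.exp (2*b)) (X ^ d), mul_assoc, ← Real.exp_add]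
          ring_nf

lemma arith2 (κ ℓ a : ℕ) (b : ℝ) (hℓ : 2 ≤ ℓ) (hκ : ℓ + 1 ≤ κ) :
    (Real.exp (6*b) / (κ:ℝ)) * ((1 - (ℓ:ℝ) / ((κ:ℝ) + (a:ℝ))) ^ ((a:ℤ) - 1))
      ≤ Real.exp (6*b) / ((κ:ℝ) - (ℓ:ℝ)) := by
  have hκpos : (0:ℝ) < (κ:ℝ) := by
    have : 0 < κ := by omega
    exact_mod_cast this
  have hℓκ : (ℓ:ℝ) + 1 ≤ (κ:ℝ) := by exact_mod_cast hκ
  have hcℓ : (0:ℝ) < (κ:ℝ) - (ℓ:ℝ) := by linarith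
  have hXeq : (1 - (ℓ:ℝ) / ((κ:ℝ) + (a:ℝ))) = ((κ:ℝ) - (ℓ:ℝ) + (a:ℝ)) / ((κ:ℝ) + (a:ℝ)) := by
    have hne : (κ:ℝ) + (a:ℝ) ≠ 0 := by positivity
    field_simp
    ring
  rw [hXeq]
  cases a with
  | zero =>
    have hz : ((0:ℕ):ℤ) - 1 = -1 := by norm_num
    rw [hz, zpow_neg_one]
    push_cast
    rw [add_zero, add_zero, inv_div]
    apply le_of_eq
    field_simp
  | succ d =>
    have hz : (((d+1:ℕ)):ℤ) - 1 = (d:ℤ) := by push_cast; ring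
    rw [hz, zpow_natCast]
    have hXle : ((κ:ℝ) - (ℓ:ℝ) + ((d+1:ℕ):ℝ)) / ((κ:ℝ) + ((d+1:ℕ):ℝ)) ≤ 1 := by
      rw [div_le_one (by positivity)]
      linarith
    have hXnn : 0 ≤ ((κ:ℝ) - (ℓ:ℝ) + ((d+1:ℕ):ℝ)) / ((κ:ℝ) + ((d+1:ℕ):ℝ)) := by
      positivity
    calc (Real.exp (6*b) / (κ:ℝ)) * (((κ:ℝ) - (ℓ:ℝ) + ((d+1:ℕ):ℝ)) / ((κ:ℝ) + ((d+1:ℕ):ℝ))) ^ d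
        ≤ (Real.exp (6*b) / (κ:ℝ)) * 1 := by
          apply mul_le_mul_of_nonneg_left _ (by positivity)
          exact pow_le_one₀ hXnn hXle
      _ = Real.exp (6*b) / (κ:ℝ) := mul_one _
      _ ≤ Real.exp (6*b) / ((κ:ℝ) - (ℓ:ℝ)) := by
          apply div_le_div_of_nonneg_left (by positivity) hcℓ
          linarith

end PLwork

theorem statement_14 {ι : Type*} [DecidableEq ι]
    (θ : ι → ℝ) (S : Finset ι) (b : ℝ)
    (hθb : ∀ i ∈ S, |θ i| ≤ b)
    (i : ι) (hi : i ∈ S)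
    (ℓ : ℕ) (hℓ1 : 1 ≤ ℓ) (hℓ2 : ℓ ≤ S.card - 1)
    (αt : ℝ)
    (hαt : IsLeast { x : ℝ | ∃ ℓ' : ℕ, 1 ≤ ℓ' ∧ ℓ' ≤ ℓ ∧
        ∃ Ω : Finset ι, Ω ⊆ S \ {i} ∧ Ω.card = S.card - ℓ' + 1 ∧
          x = Real.exp (θ i) / ((∑ k ∈ Ω, Real.exp (θ k)) / (Ω.card : ℝ)) } αt) :
    PLprobEvent θ S (fun σ => rankOf σ ⟨i, hi⟩ = ℓ) ≤
      (Real.exp (6 * b) / (S.card : ℝ)) *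
        (1 - (ℓ : ℝ) / ((S.card : ℝ) + (⌊αt⌋ : ℝ))) ^ (⌊αt⌋ - 1)
    ∧ (Real.exp (6 * b) / (S.card : ℝ)) *
        (1 - (ℓ : ℝ) / ((S.card : ℝ) + (⌊αt⌋ : ℝ))) ^ (⌊αt⌋ - 1) ≤
      Real.exp (6 * b) / ((S.card : ℝ) - ℓ) := by
  obtain ⟨hmem, hlb⟩ := hαt
  obtain ⟨ℓ₀, hℓ₀1, hℓ₀ℓ, Ω₀, hΩ₀sub, hΩ₀card, hx⟩ := hmem
  have hSpos : 0 < S.card := Finset.card_pos.2 ⟨i, hi⟩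
  have hκℓ : ℓ + 1 ≤ S.card := by omega
  have hΩ₀sub' : Ω₀ ⊆ S.erase i := by rwa [← Finset.sdiff_singleton_eq_erase]
  have hΩ₀S : Ω₀ ⊆ S := hΩ₀sub'.trans (Finset.erase_subset i S)
  have hΩ₀le : Ω₀.card ≤ S.card - 1 := by
    calc Ω₀.card ≤ (S.erase i).card := Finset.card_le_card hΩ₀sub'
      _ = S.card - 1 := Finset.card_erase_of_mem hi
  have hℓ₀2 : 2 ≤ ℓ₀ := by omega
  have hℓ2' : 2 ≤ ℓ := le_trans hℓ₀2 hℓ₀ℓ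
  have hb0 : 0 ≤ b := le_trans (abs_nonneg _) (hθb i hi)
  have hΩ₀pos : 0 < Ω₀.card := by omega
  have hΩ₀cpos : (0:ℝ) < (Ω₀.card : ℝ) := by exact_mod_cast hΩ₀pos
  have hsum0pos : 0 < ∑ k ∈ Ω₀, Real.exp (θ k) :=
    PLwork.exp_sum_pos θ (Finset.card_pos.1 hΩ₀pos)
  have hxval : αt = Real.exp (θ i) * (Ω₀.card : ℝ) / (∑ k ∈ Ω₀, Real.exp (θ k)) := by
    rw [hx, div_div_eq_mul_div]
  -- upper bound on αt
  have hαt_le : αt ≤ Real.exp (2*b) := by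
    rw [hxval, div_le_iff₀ hsum0pos]
    have h1 : Real.exp (θ i) ≤ Real.exp b := PLwork.exp_le_of_mem hθb hi
    have h2 : (Ω₀.card : ℝ) * Real.exp (-b) ≤ ∑ k ∈ Ω₀, Real.exp (θ k) :=
      PLwork.sum_exp_lower hθb hΩ₀S
    have h3 : Real.exp b * Real.exp (-b) = 1 := by rw [← Real.exp_add]; simp
    have h4 : Real.exp (2*b) = Real.exp b * Real.exp b := by rw [← Real.exp_add]; ring_nf
    calc Real.exp (θ i) * (Ω₀.card : ℝ) ≤ Real.exp b * (Ω₀.card : ℝ) :=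
          mul_le_mul_of_nonneg_right h1 (le_of_lt hΩ₀cpos)
      _ = Real.exp b * Real.exp b * ((Ω₀.card : ℝ) * Real.exp (-b)) := by
          linear_combination (-(Real.exp b * (Ω₀.card : ℝ))) * h3
      _ ≤ Real.exp (2*b) * ∑ k ∈ Ω₀, Real.exp (θ k) := by
          rw [h4]
          exact mul_le_mul_of_nonneg_left h2 (by positivity)
  have hαt_pos : 0 < αt := by
    rw [hxval]
    positivity
  have hfloor0 : 0 ≤ ⌊αt⌋ := Int.floor_nonneg.2 (le_of_lt hαt_pos)
  set a : ℕ := ⌊αt⌋.toNat with hadef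
  have hfloorZ : ⌊αt⌋ = (a : ℤ) := (Int.toNat_of_nonneg hfloor0).symm
  have hfloorR : ((⌊αt⌋ : ℤ) : ℝ) = (a : ℝ) := by rw [hfloorZ]; push_cast; rfl
  have ha_le : (a:ℝ) ≤ αt := by
    rw [← hfloorR]
    exact Int.floor_le αt
  have ha2b : (a:ℝ) ≤ Real.exp (2*b) := le_trans ha_le hαt_le
  -- key hypothesis for the inductive bound
  have hα : ∀ (ℓ' : ℕ) (Ω : Finset ι), 1 ≤ ℓ' → ℓ' ≤ ℓ → Ω ⊆ S.erase i →
      Ω.card = S.card - ℓ' + 1 →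
      (a : ℝ) * (∑ k ∈ Ω, Real.exp (θ k)) ≤ Real.exp (θ i) * (Ω.card : ℝ) := by
    intro ℓ' Ω hℓ'1 hℓ'ℓ hΩsub hΩcard
    have hΩS : Ω ⊆ S := hΩsub.trans (Finset.erase_subset i S)
    have hΩpos : 0 < Ω.card := by omega
    have hsumpos : 0 < ∑ k ∈ Ω, Real.exp (θ k) :=
      PLwork.exp_sum_pos θ (Finset.card_pos.1 hΩpos)
    have hmem' : Real.exp (θ i) / ((∑ k ∈ Ω, Real.exp (θ k)) / (Ω.card : ℝ))
        ∈ { x : ℝ | ∃ ℓ' : ℕ, 1 ≤ ℓ' ∧ ℓ' ≤ ℓ ∧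
          ∃ Ω : Finset ι, Ω ⊆ S \ {i} ∧ Ω.card = S.card - ℓ' + 1 ∧
            x = Real.exp (θ i) / ((∑ k ∈ Ω, Real.exp (θ k)) / (Ω.card : ℝ)) } := by
      refine ⟨ℓ', hℓ'1, hℓ'ℓ, Ω, ?_, hΩcard, rfl⟩
      rwa [Finset.sdiff_singleton_eq_erase]
    have hαtle := hlb hmem'
    rw [div_div_eq_mul_div] at hαtle
    have : (a:ℝ) ≤ Real.exp (θ i) * (Ω.card : ℝ) / (∑ k ∈ Ω, Real.exp (θ k)) :=
      le_trans ha_le hαtle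
    rw [le_div_iff₀ hsumpos] at this
    linarith
  have hmain := PLwork.PE_bound θ S b i ℓ a hθb hb0 hℓ1 hκℓ hα ℓ hℓ1 S
    (Finset.Subset.refl S) hi (by omega)
  have hIco : ℓ - ℓ + 1 = 1 := by omega
  rw [hIco] at hmain
  rw [← PLwork.PE_eq θ hi ℓ] at *
  have h1 := PLwork.arith1 S.card ℓ a b hb0 hℓ2' hκℓ ha2b
  have h2 := PLwork.arith2 S.card ℓ a b hℓ2' hκℓ
  rw [hfloorZ]
  push_cast
  constructor
  · exact le_trans hmain h1
  · exact h2
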